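/- Let A = S + g·hᵀ and B = S + g·kᵀ be stable real n×n matrices in companion form, and suppose X and Y are nonzero real symmetric positive semidefinite matrices with A·X + X·Aᵀ + B·Y + Y·Bᵀ = 0. Set Z = X + Y and ξ = S·Z·g + Z·h. Then Z satisfies Π·S·Z·Π + Π·Z·Sᵀ·Π = 0, the vector ξ lies in the range of Z, ⟨h−k, ξ⟩ > 0, and ⟨ξ, Z⁺·ξ⟩ ≤ ⟨h−k, ξ⟩, where Z⁺ is the Moore–Penrose pseudoinverse of Z. -/

import Mathlib

open Matrix

/-- A real square matrix is *stable* if every eigenvalue (over ℂ) has negative real part. -/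
def IsStable {n : ℕ} (A : Matrix (Fin n) (Fin n) ℝ) : Prop :=
  ∀ μ : ℂ, μ ∈ spectrum ℂ (A.map (algebraMap ℝ ℂ)) → μ.re < 0

/-- The `n × n` shift matrix `S` with `S_{i,i+1} = 1` and all other entries `0`. -/
def Smat (n : ℕ) : Matrix (Fin n) (Fin n) ℝ :=
  Matrix.of fun i j => if (i : ℕ) + 1 = (j : ℕ) then 1 else 0

/-- The last standard basis vector `g` of `ℝⁿ`. -/
def gvec (n : ℕ) : Fin n → ℝ := fun i => if (i : ℕ) = n - 1 then 1 else 0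

/-- `Π = I − g·gᵀ`, the orthogonal projection onto the orthogonal complement of `g`. -/
def Pimat (n : ℕ) : Matrix (Fin n) (Fin n) ℝ := 1 - vecMulVec (gvec n) (gvec n)

/-- `P` is the Moore–Penrose pseudoinverse of `M` (the four Penrose conditions). -/
def IsMoorePenroseInv {n : ℕ} (M P : Matrix (Fin n) (Fin n) ℝ) : Prop :=
  M * P * M = M ∧ P * M * P = P ∧ (M * P)ᵀ = M * P ∧ (P * M)ᵀ = P * M

namespace XYAux

variable {n : ℕ}

lemma vecMulVec_mul (a b : Fin n → ℝ) (M : Matrix (Fin n) (Fin n) ℝ) :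
    vecMulVec a b * M = vecMulVec a (b ᵥ* M) := by
  ext i j
  simp only [Matrix.mul_apply, vecMulVec_apply, Matrix.vecMul, dotProduct,
    Finset.sum_mul, Finset.mul_sum]
  exact Finset.sum_congr rfl fun x _ => by ring

lemma mul_vecMulVec (a b : Fin n → ℝ) (M : Matrix (Fin n) (Fin n) ℝ) :
    M * vecMulVec a b = vecMulVec (M *ᵥ a) b := by
  ext i j
  simp only [Matrix.mul_apply, vecMulVec_apply, Matrix.mulVec, dotProduct,
    Finset.sum_mul, Finset.mul_sum]
  exact Finset.sum_congr rfl fun x _ => by ring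

lemma vecMulVec_mulVec (a b v : Fin n → ℝ) :
    vecMulVec a b *ᵥ v = (b ⬝ᵥ v) • a := by
  funext i
  simp only [Matrix.mulVec, vecMulVec_apply, dotProduct, Pi.smul_apply,
    smul_eq_mul, Finset.sum_mul, Finset.mul_sum]
  exact Finset.sum_congr rfl fun x _ => by ring

lemma transpose_vecMulVec (a b : Fin n → ℝ) :
    (vecMulVec a b)ᵀ = vecMulVec b a := by
  ext i j; simp [vecMulVec_apply, mul_comm]

lemma vecMulVec_add_right (a u v : Fin n → ℝ) :
    vecMulVec a (u + v) = vecMulVec a u + vecMulVec a v := by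
  ext i j; simp [vecMulVec_apply, mul_add]

lemma vecMulVec_add_left (a u v : Fin n → ℝ) :
    vecMulVec (u + v) a = vecMulVec u a + vecMulVec v a := by
  ext i j; simp [vecMulVec_apply, add_mul]

lemma vecMulVec_mul_vecMulVec (a b c d : Fin n → ℝ) :
    vecMulVec a b * vecMulVec c d = (b ⬝ᵥ c) • vecMulVec a d := by
  ext i j
  simp only [Matrix.mul_apply, vecMulVec_apply, dotProduct, Matrix.smul_apply,
    smul_eq_mul, Finset.sum_mul, Finset.mul_sum]
  exact Finset.sum_congr rfl fun x _ => by ring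

lemma g_dot_g (hn : 0 < n) : gvec n ⬝ᵥ gvec n = 1 := by
  have hlast : ((⟨n - 1, by omega⟩ : Fin n) : ℕ) = n - 1 := rfl
  simp only [dotProduct, gvec]
  rw [Finset.sum_eq_single (⟨n - 1, by omega⟩ : Fin n)]
  · simp
  · intro i _ hi
    have : (i : ℕ) ≠ n - 1 := by
      intro hc; apply hi; apply Fin.ext; simp [hc]
    simp [this]
  · simp

lemma St_mulVec_g : (Smat n)ᵀ *ᵥ gvec n = 0 := by
  funext i
  simp only [Matrix.mulVec, dotProduct, Matrix.transpose_apply, Smat, gvec,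
    Matrix.of_apply, Pi.zero_apply]
  apply Finset.sum_eq_zero
  intro j _
  have hj := j.isLt
  have hi := i.isLt
  by_cases h1 : (j : ℕ) + 1 = (i : ℕ)
  · have : ¬ ((j : ℕ) = n - 1) := by omega
    simp [h1, this]
  · simp [h1]

lemma g_vecMul_S : gvec n ᵥ* Smat n = 0 := by
  rw [← Matrix.mulVec_transpose]
  exact St_mulVec_g


open Polynomial

lemma eval_charpoly_det {m : ℕ} (M : Matrix (Fin m) (Fin m) ℂ) (t : ℂ) :
    M.charpoly.eval t = (t • (1 : Matrix (Fin m) (Fin m) ℂ) - M).det := by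
  rw [Matrix.charpoly, ← Polynomial.coe_evalRingHom, RingHom.map_det]
  congr 1
  ext i j
  by_cases hij : i = j
  · subst hij
    simp [Matrix.map_apply, Matrix.charmatrix_apply_eq, Matrix.sub_apply, Matrix.smul_apply,
      Matrix.one_apply]
  · simp [Matrix.map_apply, Matrix.charmatrix_apply_ne _ _ _ hij, Matrix.sub_apply,
      Matrix.smul_apply, Matrix.one_apply, hij]

lemma mem_spectrum_of_root {m : ℕ} (M : Matrix (Fin m) (Fin m) ℂ) (a : ℂ)
    (ha : M.charpoly.eval a = 0) : a ∈ spectrum ℂ M := by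
  rw [spectrum.mem_iff]
  intro hu
  rw [Algebra.algebraMap_eq_smul_one] at hu
  have hdet := (Matrix.isUnit_iff_isUnit_det _).mp hu
  rw [isUnit_iff_ne_zero] at hdet
  exact hdet (by rw [← eval_charpoly_det]; exact ha)

lemma isUnit_of_not_mem_spectrum {m : ℕ} (M : Matrix (Fin m) (Fin m) ℂ) (a : ℂ)
    (ha : a ∉ spectrum ℂ M) : IsUnit (a • (1 : Matrix (Fin m) (Fin m) ℂ) - M) := by
  rw [spectrum.mem_iff, not_not, Algebra.algebraMap_eq_smul_one] at ha
  exact ha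

lemma lyap_unique {n : ℕ} (A : Matrix (Fin n) (Fin n) ℝ) (hA : IsStable A)
    (Z : Matrix (Fin n) (Fin n) ℝ) (hZ : A * Z + Z * Aᵀ = 0) : Z = 0 := by
  classical
  set Ac : Matrix (Fin n) (Fin n) ℂ := A.map (algebraMap ℝ ℂ) with hAc
  set Zc : Matrix (Fin n) (Fin n) ℂ := Z.map (algebraMap ℝ ℂ) with hZcdef
  set N : Matrix (Fin n) (Fin n) ℂ := -Acᵀ with hN
  have hAZ : Ac * Zc = Zc * N := by
    have h0 : Ac * Zc + Zc * Acᵀ = 0 := by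
      have h2 := congrArg (algebraMap ℝ ℂ).mapMatrix hZ
      simp only [map_add, map_zero, RingHom.mapMatrix_apply] at h2
      rw [Matrix.map_mul, Matrix.map_mul, Matrix.transpose_map] at h2
      simpa [hAc, hZcdef] using h2
    have h1 := eq_neg_of_add_eq_zero_left h0
    rw [h1, hN, Matrix.mul_neg]
  have hpow : ∀ m : ℕ, Ac ^ m * Zc = Zc * N ^ m := by
    intro m
    induction m with
    | zero => simp
    | succ m ih =>
      calc Ac ^ (m + 1) * Zc = Ac ^ m * (Ac * Zc) := by rw [pow_succ, mul_assoc]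
        _ = Ac ^ m * (Zc * N) := by rw [hAZ]
        _ = (Ac ^ m * Zc) * N := by rw [mul_assoc]
        _ = Zc * N ^ m * N := by rw [ih]
        _ = Zc * N ^ (m + 1) := by rw [pow_succ, mul_assoc]
  have haeval : ∀ p : ℂ[X], aeval Ac p * Zc = Zc * aeval N p := by
    intro p
    induction p using Polynomial.induction_on' with
    | add p q hp hq => rw [map_add, map_add, add_mul, mul_add, hp, hq]
    | monomial m a =>
      rw [aeval_monomial, aeval_monomial, Algebra.algebraMap_eq_smul_one,
        smul_mul_assoc, smul_mul_assoc, smul_mul_assoc, one_mul, one_mul,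
        mul_smul_comm, hpow m]
  set p : ℂ[X] := Ac.charpoly with hp
  have hCH : aeval Ac p = 0 := Matrix.aeval_self_charpoly Ac
  have h0 : Zc * aeval N p = 0 := by rw [← haeval, hCH, zero_mul]
  have hmonic : p.Monic := Ac.charpoly_monic
  have hsplit : p = (p.roots.map fun a : ℂ => X - C a).prod :=
    (IsAlgClosed.splits p).eq_prod_roots_of_monic hmonic
  -- units of each factor
  have hunit : ∀ a ∈ p.roots, IsUnit (N - algebraMap ℂ (Matrix (Fin n) (Fin n) ℂ) a) := by
    intro a ha
    have haspec : a ∈ spectrum ℂ Ac := by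
      apply mem_spectrum_of_root
      exact (Polynomial.mem_roots hmonic.ne_zero).mp ha
    have hre := hA a haspec
    have hnmem : (-a) ∉ spectrum ℂ Ac := by
      intro hmem
      have := hA _ hmem
      simp only [Complex.neg_re] at this
      linarith
    have hUnit := isUnit_of_not_mem_spectrum Ac (-a) hnmem
    have hEq : N - algebraMap ℂ (Matrix (Fin n) (Fin n) ℂ) a
        = ((-a) • (1 : Matrix (Fin n) (Fin n) ℂ) - Ac)ᵀ := by
      rw [Algebra.algebraMap_eq_smul_one, hN]
      rw [Matrix.transpose_sub, Matrix.transpose_smul, Matrix.transpose_one]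
      rw [neg_smul]
      abel
    rw [hEq]
    rw [Matrix.isUnit_iff_isUnit_det, Matrix.det_transpose, ← Matrix.isUnit_iff_isUnit_det]
    exact hUnit
  set l : List ℂ := p.roots.toList with hl
  have hroots : (l : Multiset ℂ) = p.roots := Multiset.coe_toList _
  have hplist : p = (l.map fun a : ℂ => X - C a).prod := by
    conv_lhs => rw [hsplit, ← hroots]
    rw [Multiset.map_coe, Multiset.prod_coe]
  have haevalN : aeval N p
      = (l.map fun a : ℂ => N - algebraMap ℂ (Matrix (Fin n) (Fin n) ℂ) a).prod := by
    conv_lhs => rw [hplist]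
    rw [map_list_prod (aeval N), List.map_map]
    congr 1
    apply List.map_congr_left
    intro a _
    simp [map_sub, aeval_X, aeval_C, Polynomial.aeval_def]
  have hIsUnit : IsUnit (aeval N p) := by
    rw [haevalN]
    apply List.prod_isUnit
    intro m hm
    obtain ⟨a, hal, rfl⟩ := List.mem_map.mp hm
    exact hunit a (by rwa [Multiset.mem_toList] at hal)
  obtain ⟨u, hu⟩ := hIsUnit
  have hZc0 : Zc = 0 := by
    have h3 : Zc * (u : Matrix (Fin n) (Fin n) ℂ) = 0 := by rw [hu]; exact h0
    calc Zc = Zc * ((u : Matrix (Fin n) (Fin n) ℂ) * (↑u⁻¹ : Matrix (Fin n) (Fin n) ℂ)) := by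
          rw [Units.mul_inv, mul_one]
      _ = (Zc * (u : Matrix (Fin n) (Fin n) ℂ)) * (↑u⁻¹ : Matrix (Fin n) (Fin n) ℂ) := by
          rw [mul_assoc]
      _ = 0 := by rw [h3, zero_mul]
  ext i j
  have h4 := congrFun (congrFun hZc0 i) j
  have h5 : (algebraMap ℝ ℂ) (Z i j) = 0 := by
    simpa [hZcdef, Matrix.map_apply] using h4
  simpa using h5

end XYAux

open XYAux

/-- From a nonzero positive semidefinite solution `(X, Y)` of the Lyapunov intersection
equation for stable companion-form `A = S + g·hᵀ`, `B = S + g·kᵀ`, the matrix `Z = X + Y`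
satisfies the Hankel equation, `ξ = S·Z·g + Z·h` lies in the range of `Z`, `⟨h−k, ξ⟩ > 0`,
and `⟨ξ, Z⁺ξ⟩ ≤ ⟨h−k, ξ⟩` (i.e. `0 < F(Z) ≤ 1`). -/
theorem XY_solution_gives_Z_with_F_le_one {n : ℕ} (hn : 0 < n) (h k : Fin n → ℝ)
    (hA : IsStable (Smat n + vecMulVec (gvec n) h))
    (hB : IsStable (Smat n + vecMulVec (gvec n) k))
    (X Y : Matrix (Fin n) (Fin n) ℝ) (hX0 : X ≠ 0) (hY0 : Y ≠ 0)
    (hX : X.PosSemidef) (hY : Y.PosSemidef)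
    (heq : (Smat n + vecMulVec (gvec n) h) * X + X * (Smat n + vecMulVec (gvec n) h)ᵀ +
      (Smat n + vecMulVec (gvec n) k) * Y + Y * (Smat n + vecMulVec (gvec n) k)ᵀ = 0)
    (Z : Matrix (Fin n) (Fin n) ℝ) (hZdef : Z = X + Y)
    (ξ : Fin n → ℝ) (hξ : ξ = (Smat n * Z).mulVec (gvec n) + Z.mulVec h)
    (Zp : Matrix (Fin n) (Fin n) ℝ) (hZp : IsMoorePenroseInv Z Zp) :
    (Pimat n * Smat n * Z * Pimat n + Pimat n * Z * (Smat n)ᵀ * Pimat n = 0) ∧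
    (∃ y : Fin n → ℝ, Z.mulVec y = ξ) ∧
    0 < (h - k) ⬝ᵥ ξ ∧
    ξ ⬝ᵥ Zp.mulVec ξ ≤ (h - k) ⬝ᵥ ξ := by
  classical
  have hconj : ∀ (M : Matrix (Fin n) (Fin n) ℝ), Mᴴ = Mᵀ := fun M => by
    ext i j; simp [Matrix.conjTranspose_apply]
  have hstar : ∀ v : Fin n → ℝ, star v = v := fun v => by
    funext i; simp
  have hXsym : Xᵀ = X := by rw [← hconj]; exact hX.1
  have hYsym : Yᵀ = Y := by rw [← hconj]; exact hY.1
  have hZpsd : Z.PosSemidef := by rw [hZdef]; exact hX.add hY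
  have hZsym : Zᵀ = Z := by rw [← hconj]; exact hZpsd.1
  have hgg : gvec n ⬝ᵥ gvec n = 1 := XYAux.g_dot_g hn
  -- quadratic-form-zero helper
  have hquad : ∀ (M : Matrix (Fin n) (Fin n) ℝ), M.PosSemidef →
      ∀ v : Fin n → ℝ, v ⬝ᵥ (M *ᵥ v) = 0 → M *ᵥ v = 0 := by
    intro M hM v hv
    exact (hM.dotProduct_mulVec_zero_iff v).mp (by rwa [hstar])
  set w : Fin n → ℝ := X *ᵥ h + Y *ᵥ k with hwdef
  -- the basic equation (E)
  have hE : Smat n * Z + Z * (Smat n)ᵀ + vecMulVec (gvec n) w + vecMulVec w (gvec n) = 0 := by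
    have e1 : (Smat n + vecMulVec (gvec n) h) * X
        = Smat n * X + vecMulVec (gvec n) (X *ᵥ h) := by
      rw [Matrix.add_mul, XYAux.vecMulVec_mul]
      congr 2
      rw [← Matrix.mulVec_transpose, hXsym]
    have e2 : X * (Smat n + vecMulVec (gvec n) h)ᵀ
        = X * (Smat n)ᵀ + vecMulVec (X *ᵥ h) (gvec n) := by
      rw [Matrix.transpose_add, Matrix.mul_add, XYAux.transpose_vecMulVec,
        XYAux.mul_vecMulVec]
    have e3 : (Smat n + vecMulVec (gvec n) k) * Y
        = Smat n * Y + vecMulVec (gvec n) (Y *ᵥ k) := by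
      rw [Matrix.add_mul, XYAux.vecMulVec_mul]
      congr 2
      rw [← Matrix.mulVec_transpose, hYsym]
    have e4 : Y * (Smat n + vecMulVec (gvec n) k)ᵀ
        = Y * (Smat n)ᵀ + vecMulVec (Y *ᵥ k) (gvec n) := by
      rw [Matrix.transpose_add, Matrix.mul_add, XYAux.transpose_vecMulVec,
        XYAux.mul_vecMulVec]
    have heq' := heq
    rw [e1, e2, e3, e4] at heq'
    rw [hZdef, hwdef, XYAux.vecMulVec_add_right, XYAux.vecMulVec_add_left,
      Matrix.add_mul, Matrix.mul_add]
    refine Eq.trans ?_ heq'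
    abel
  -- evaluate (E) at g
  have hEg : Smat n *ᵥ (Z *ᵥ gvec n) + (w ⬝ᵥ gvec n) • gvec n + w = 0 := by
    have hEg' := congrArg (fun M : Matrix (Fin n) (Fin n) ℝ => M *ᵥ gvec n) hE
    simp only [Matrix.add_mulVec, Matrix.zero_mulVec] at hEg'
    simp only [← Matrix.mulVec_mulVec] at hEg'
    rw [XYAux.St_mulVec_g, Matrix.mulVec_zero, XYAux.vecMulVec_mulVec,
      XYAux.vecMulVec_mulVec, hgg, one_smul] at hEg'
    simpa using hEg'
  have hwg : w ⬝ᵥ gvec n = 0 := by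
    have hd := congrArg (fun v : Fin n → ℝ => gvec n ⬝ᵥ v) hEg
    simp only [dotProduct_add, dotProduct_zero, dotProduct_smul, smul_eq_mul] at hd
    rw [Matrix.dotProduct_mulVec, XYAux.g_vecMul_S, zero_dotProduct, hgg,
      dotProduct_comm (gvec n) w] at hd
    linarith
  have hSZg : Smat n *ᵥ (Z *ᵥ gvec n) = -w := by
    rw [hwg, zero_smul, add_zero] at hEg
    exact eq_neg_of_add_eq_zero_left hEg
  set d : Fin n → ℝ := h - k with hddef
  have hxi : ξ = Y *ᵥ d := by
    rw [hξ, ← Matrix.mulVec_mulVec, hSZg, hZdef, Matrix.add_mulVec, hwdef, hddef,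
      Matrix.mulVec_sub]
    abel
  -- Claim 1
  have hSZZS : Smat n * Z + Z * (Smat n)ᵀ
      = -(vecMulVec (gvec n) w + vecMulVec w (gvec n)) := by
    apply eq_neg_of_add_eq_zero_left
    rw [← hE]; abel
  have hPg : Pimat n * vecMulVec (gvec n) w = 0 := by
    rw [Pimat, Matrix.sub_mul, Matrix.one_mul, XYAux.vecMulVec_mul_vecMulVec, hgg,
      one_smul, sub_self]
  have hgP : vecMulVec w (gvec n) * Pimat n = 0 := by
    rw [Pimat, Matrix.mul_sub, Matrix.mul_one, XYAux.vecMulVec_mul_vecMulVec, hgg,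
      one_smul, sub_self]
  have claim1 : Pimat n * Smat n * Z * Pimat n + Pimat n * Z * (Smat n)ᵀ * Pimat n = 0 := by
    have e : Pimat n * Smat n * Z * Pimat n + Pimat n * Z * (Smat n)ᵀ * Pimat n
        = Pimat n * (Smat n * Z + Z * (Smat n)ᵀ) * Pimat n := by
      noncomm_ring
    have e2 : Pimat n * (-(vecMulVec (gvec n) w + vecMulVec w (gvec n))) * Pimat n
        = -((Pimat n * vecMulVec (gvec n) w) * Pimat n)
          - Pimat n * (vecMulVec w (gvec n) * Pimat n) := by
      noncomm_ring
    rw [e, hSZZS, e2, hPg, hgP, Matrix.zero_mul, Matrix.mul_zero, neg_zero, sub_zero]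
  -- the range projection Q = Z * Zp
  set Q := Z * Zp with hQdef
  have hQt : Qᵀ = Q := hZp.2.2.1
  have hQZ : Q * Z = Z := hZp.1
  set R := (1 : Matrix (Fin n) (Fin n) ℝ) - Q with hRdef
  have hRt : Rᵀ = R := by rw [hRdef, Matrix.transpose_sub, Matrix.transpose_one, hQt]
  have hRZ : R * Z = 0 := by rw [hRdef, Matrix.sub_mul, Matrix.one_mul, hQZ, sub_self]
  have hsum : R * X * Rᵀ + R * Y * Rᵀ = 0 := by
    calc R * X * Rᵀ + R * Y * Rᵀ = R * (X + Y) * Rᵀ := by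
          rw [Matrix.mul_add, Matrix.add_mul]
      _ = R * Z * Rᵀ := by rw [← hZdef]
      _ = 0 := by rw [hRZ, Matrix.zero_mul]
  have hRX : (R * X * Rᵀ).PosSemidef := by rw [← hconj]; exact hX.mul_mul_conjTranspose_same R
  have hRY : (R * Y * Rᵀ).PosSemidef := by rw [← hconj]; exact hY.mul_mul_conjTranspose_same R
  have hYRv : ∀ v : Fin n → ℝ, Y *ᵥ (R *ᵥ v) = 0 := by
    intro v
    have h1 : v ⬝ᵥ ((R * X * Rᵀ) *ᵥ v) + v ⬝ᵥ ((R * Y * Rᵀ) *ᵥ v) = 0 := by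
      rw [← dotProduct_add, ← Matrix.add_mulVec, hsum, Matrix.zero_mulVec, dotProduct_zero]
    have h2 : 0 ≤ v ⬝ᵥ ((R * X * Rᵀ) *ᵥ v) := by
      have := hRX.dotProduct_mulVec_nonneg v; rwa [hstar] at this
    have h3 : 0 ≤ v ⬝ᵥ ((R * Y * Rᵀ) *ᵥ v) := by
      have := hRY.dotProduct_mulVec_nonneg v; rwa [hstar] at this
    have h4 : v ⬝ᵥ ((R * Y * Rᵀ) *ᵥ v) = 0 := by linarith
    have h5 : v ⬝ᵥ ((R * Y * Rᵀ) *ᵥ v) = (R *ᵥ v) ⬝ᵥ (Y *ᵥ (R *ᵥ v)) := by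
      simp only [← Matrix.mulVec_mulVec]
      rw [Matrix.dotProduct_mulVec, ← Matrix.mulVec_transpose, hRt]
    rw [h5] at h4
    exact hquad Y hY _ h4
  have hYR : Y * R = 0 := by
    ext i j
    have h6 := congrFun (hYRv (Pi.single j 1)) i
    rw [Matrix.mulVec_mulVec] at h6
    simpa [Matrix.mulVec_single] using h6
  have hQY : Q * Y = Y := by
    have h6 : Y * Q = Y := by
      have h7 : Y - Y * Q = 0 := by
        have := hYR; rwa [hRdef, Matrix.mul_sub, Matrix.mul_one] at this
      have := sub_eq_zero.mp h7; exact this.symm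
    have h8 : Q * Y = (Y * Q)ᵀ := by rw [Matrix.transpose_mul, hQt, hYsym]
    rw [h8, h6, hYsym]
  have claim2vec : Z *ᵥ (Zp *ᵥ ξ) = ξ := by
    rw [Matrix.mulVec_mulVec, ← hQdef, hxi, Matrix.mulVec_mulVec, hQY]
  -- Claim 3
  have hYd : Y *ᵥ d ≠ 0 := by
    intro h7
    have hYk : Y *ᵥ k = Y *ᵥ h := by
      rw [hddef, Matrix.mulVec_sub] at h7
      exact (sub_eq_zero.mp h7).symm
    have hwZh : w = Z *ᵥ h := by rw [hwdef, hYk, hZdef, Matrix.add_mulVec]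
    have hAZ : (Smat n + vecMulVec (gvec n) h) * Z
        + Z * (Smat n + vecMulVec (gvec n) h)ᵀ = 0 := by
      rw [Matrix.add_mul, Matrix.transpose_add, Matrix.mul_add, XYAux.transpose_vecMulVec,
        XYAux.vecMulVec_mul, XYAux.mul_vecMulVec]
      have hvm : h ᵥ* Z = Z *ᵥ h := by rw [← Matrix.mulVec_transpose, hZsym]
      rw [hvm, ← hwZh]
      refine Eq.trans ?_ hE
      abel
    have hZ0 : Z = 0 := XYAux.lyap_unique _ hA _ hAZ
    apply hX0
    have hXY0 : X + Y = 0 := by rw [← hZdef]; exact hZ0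
    have hXv : ∀ v : Fin n → ℝ, X *ᵥ v = 0 := by
      intro v
      apply hquad X hX
      have h8 : v ⬝ᵥ (X *ᵥ v) + v ⬝ᵥ (Y *ᵥ v) = 0 := by
        rw [← dotProduct_add, ← Matrix.add_mulVec, hXY0, Matrix.zero_mulVec, dotProduct_zero]
      have h9 := hX.dotProduct_mulVec_nonneg v; rw [hstar] at h9
      have h10 := hY.dotProduct_mulVec_nonneg v; rw [hstar] at h10
      linarith
    ext i j
    have h11 := congrFun (hXv (Pi.single j 1)) i
    simpa [Matrix.mulVec_single] using h11
  have hq0 : 0 ≤ d ⬝ᵥ (Y *ᵥ d) := by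
    have := hY.dotProduct_mulVec_nonneg d; rwa [hstar] at this
  have claim3 : 0 < (h - k) ⬝ᵥ ξ := by
    rw [hxi, ← hddef]
    rcases lt_or_eq_of_le hq0 with hlt | heq0
    · exact hlt
    · exact absurd (hquad Y hY d heq0.symm) hYd
  refine ⟨claim1, ⟨Zp *ᵥ ξ, claim2vec⟩, claim3, ?_⟩
  -- Claim 4
  set b := Zp *ᵥ ξ with hbdef
  have hZb : Z *ᵥ b = ξ := claim2vec
  have ht : ξ ⬝ᵥ (Zp *ᵥ ξ) = b ⬝ᵥ (Z *ᵥ b) := by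
    rw [← hbdef]
    conv_lhs => rw [← hZb]
    rw [dotProduct_comm]
  obtain ⟨Rt, hRtmul, hRtsym⟩ : ∃ Rt : Matrix (Fin n) (Fin n) ℝ, Rt * Rt = Y ∧ Rtᵀ = Rt := by
    open scoped MatrixOrder in
    exact ⟨CFC.sqrt Y, CFC.sqrt_mul_sqrt_self Y hY.nonneg,
      by rw [← hconj]; exact (CFC.sqrt_nonneg Y).posSemidef.1⟩
  have hfact : ∀ u v : Fin n → ℝ, u ⬝ᵥ (Y *ᵥ v) = (Rt *ᵥ u) ⬝ᵥ (Rt *ᵥ v) := by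
    intro u v
    rw [← hRtmul, ← Matrix.mulVec_mulVec, Matrix.dotProduct_mulVec,
      ← Matrix.mulVec_transpose, hRtsym]
  have hCS : ∀ u v : Fin n → ℝ, (u ⬝ᵥ v) ^ 2 ≤ (u ⬝ᵥ u) * (v ⬝ᵥ v) := by
    intro u v
    have := Finset.sum_mul_sq_le_sq_mul_sq Finset.univ u v
    simpa [dotProduct, sq] using this
  have hαt : b ⬝ᵥ (Y *ᵥ b) ≤ b ⬝ᵥ (Z *ᵥ b) := by
    rw [hZdef, Matrix.add_mulVec, dotProduct_add]
    have h12 := hX.dotProduct_mulVec_nonneg b; rw [hstar] at h12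
    linarith
  have htY : b ⬝ᵥ (Z *ᵥ b) = b ⬝ᵥ (Y *ᵥ d) := by rw [hZb, hxi]
  have key : (b ⬝ᵥ (Y *ᵥ d)) ^ 2 ≤ (b ⬝ᵥ (Y *ᵥ b)) * (d ⬝ᵥ (Y *ᵥ d)) := by
    rw [hfact b d, hfact b b, hfact d d]
    exact hCS _ _
  have hβpos : 0 < d ⬝ᵥ (Y *ᵥ d) := by
    have := claim3; rwa [hxi, ← hddef] at this
  have hgoal : ξ ⬝ᵥ (Zp *ᵥ ξ) ≤ d ⬝ᵥ (Y *ᵥ d) := by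
    rw [ht]
    nlinarith [hαt, htY, key, hβpos, hq0]
  calc ξ ⬝ᵥ Zp *ᵥ ξ ≤ d ⬝ᵥ (Y *ᵥ d) := hgoal
    _ = (h - k) ⬝ᵥ ξ := by rw [hxi, ← hddef]
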